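/- Let Σ=(X,U,F) be a system, Q ⊆ X a nonempty set, and (𝒜,G) an invariant cover of Σ and Q. Then the function τ ↦ log₂ r_inv(τ,Q) from ℕ to ℝ≥0 is subadditive, i.e. for all τ₁,τ₂ ∈ ℕ one has log₂ r_inv(τ₁+τ₂,Q) ≤ log₂ r_inv(τ₁,Q) + log₂ r_inv(τ₂,Q), and consequently lim_{τ→∞} (1/τ) log₂ r_inv(τ,Q) exists and equals inf_{τ∈ℕ} (1/τ) log₂ r_inv(τ,Q). -/

import Mathlib

open Set Filter Topology

/-- An invariant cover `(𝒜, G)` of the system with transition function `F` and the set `Q`: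
`cov` is a finite cover of `Q` by subsets of `Q` and `G` assigns to each cover element an
input such that `F(A, G(A)) ⊆ Q`. -/
structure InvCover {X U : Type*} (F : X → U → Set X) (Q : Set X) where
  cov : Set (Set X)
  G : Set X → U
  finite : cov.Finite
  subset : ∀ A ∈ cov, A ⊆ Q
  covers : Q ⊆ ⋃₀ cov
  inv : ∀ A ∈ cov, ∀ x ∈ A, F x (G A) ⊆ Q

variable {X U : Type*}

/-- The set `P(α|_{[0;t]})` associated with `𝒮 ⊆ 𝒜^{[0;τ)}`: for `t+1 < τ` it is the set of
possible successor cover elements of the initial piece `α|_{[0;t]}`, and for `t = τ-1`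
(i.e. `¬ t + 1 < τ`) it is the set `P(α)` of initial cover elements. -/
def Pset {τ : ℕ} (𝒮 : Set (Fin τ → Set X)) (α : Fin τ → Set X) (t : ℕ) :
    Set (Set X) :=
  if ht : t + 1 < τ then
    {A | ∃ β ∈ 𝒮, (∀ t' : Fin τ, (t' : ℕ) ≤ t → β t' = α t') ∧ A = β ⟨t + 1, ht⟩}
  else
    {A | ∃ β ∈ 𝒮, ∃ h0 : 0 < τ, A = β ⟨0, h0⟩}

/-- `𝒮` is `(τ,Q)`-spanning in the invariant cover `c`. -/
def IsSpanning (F : X → U → Set X) (Q : Set X) (c : InvCover F Q) (τ : ℕ)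
    (𝒮 : Set (Fin τ → Set X)) : Prop :=
  (∀ α ∈ 𝒮, ∀ t, α t ∈ c.cov) ∧
  (∀ x ∈ Q, ∃ α ∈ 𝒮, ∃ h0 : 0 < τ, x ∈ α ⟨0, h0⟩) ∧
  (∀ α ∈ 𝒮, ∀ t : Fin τ, (t : ℕ) + 1 < τ →
    ∀ x ∈ α t, F x (c.G (α t)) ⊆ ⋃ A ∈ Pset 𝒮 α (t : ℕ), A)

/-- The expansion number `N(𝒮)`. -/
noncomputable def expNum {τ : ℕ} (𝒮 : Set (Fin τ → Set X)) : ℕ :=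
  sSup {n | ∃ α ∈ 𝒮, n = ∏ t ∈ Finset.range τ, (Pset 𝒮 α t).ncard}

/-- `r_inv(τ, Q)` : the smallest expansion number of a `(τ,Q)`-spanning set (`⊤` if no
spanning set exists). -/
noncomputable def rinv (F : X → U → Set X) (Q : Set X) (c : InvCover F Q)
    (τ : ℕ) : ℕ∞ :=
  sInf {n | ∃ 𝒮 : Set (Fin τ → Set X), IsSpanning F Q c τ 𝒮 ∧ n = (expNum 𝒮 : ℕ∞)}

/-- Base-2 logarithm `ℕ∞ → EReal`, with `log₂ ∞ = ∞`. -/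
noncomputable def elog2 (m : ℕ∞) : EReal :=
  WithTop.recTopCoe ⊤ (fun n : ℕ => ((Real.logb 2 n : ℝ) : EReal)) m

/-- The entropy `h(𝒜,G)` of an invariant cover, defined through the infimum
`inf_{τ ≥ 1} (1/τ) log₂ r_inv(τ,Q)` (which equals the limit). -/
noncomputable def coverEntropy (F : X → U → Set X) (Q : Set X)
    (c : InvCover F Q) : EReal :=
  ⨅ (τ : ℕ) (_ : 0 < τ), (((τ : ℝ)⁻¹ : ℝ) : EReal) * elog2 (rinv F Q c τ)

/-- The invariance feedback entropy `h_inv` of the system and `Q`. -/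
noncomputable def invEntropy (F : X → U → Set X) (Q : Set X) : EReal :=
  ⨅ c : InvCover F Q, coverEntropy F Q c

-- ### auxiliary lemmas

lemma pset_subset_cov {F : X → U → Set X} {Q : Set X} {c : InvCover F Q} {τ : ℕ}
    {𝒮 : Set (Fin τ → Set X)} (h : ∀ α ∈ 𝒮, ∀ t, α t ∈ c.cov)
    (α : Fin τ → Set X) (t : ℕ) : Pset 𝒮 α t ⊆ c.cov := by
  intro A hA
  unfold Pset at hA
  split at hA
  · obtain ⟨β, hβ, -, rfl⟩ := hA; exact h β hβ _
  · obtain ⟨β, hβ, h0, rfl⟩ := hA; exact h β hβ _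

lemma pset_nonempty {τ : ℕ} {𝒮 : Set (Fin τ → Set X)} (hτ : 0 < τ)
    {α : Fin τ → Set X} (hα : α ∈ 𝒮) (t : ℕ) : (Pset 𝒮 α t).Nonempty := by
  unfold Pset
  split
  · next ht => exact ⟨α ⟨t + 1, ht⟩, α, hα, fun _ _ => rfl, rfl⟩
  · exact ⟨α ⟨0, hτ⟩, α, hα, hτ, rfl⟩

lemma one_le_pset_ncard {F : X → U → Set X} {Q : Set X} {c : InvCover F Q} {τ : ℕ}
    {𝒮 : Set (Fin τ → Set X)} (h : ∀ α ∈ 𝒮, ∀ t, α t ∈ c.cov) (hτ : 0 < τ)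
    {α : Fin τ → Set X} (hα : α ∈ 𝒮) (t : ℕ) : 1 ≤ (Pset 𝒮 α t).ncard :=
  (Set.ncard_pos (c.finite.subset (pset_subset_cov h α t))).2 (pset_nonempty hτ hα t)

lemma pset_ncard_le {F : X → U → Set X} {Q : Set X} {c : InvCover F Q} {τ : ℕ}
    {𝒮 : Set (Fin τ → Set X)} (h : ∀ α ∈ 𝒮, ∀ t, α t ∈ c.cov)
    (α : Fin τ → Set X) (t : ℕ) : (Pset 𝒮 α t).ncard ≤ c.cov.ncard :=
  Set.ncard_le_ncard (pset_subset_cov h α t) c.finite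

lemma full_spanning (F : X → U → Set X) (Q : Set X) (hQ : Q.Nonempty)
    (c : InvCover F Q) {τ : ℕ} (hτ : 0 < τ) :
    IsSpanning F Q c τ {α : Fin τ → Set X | ∀ t, α t ∈ c.cov} := by
  refine ⟨fun α hα t => hα t, ?_, ?_⟩
  · intro x hx
    obtain ⟨A, hA, hxA⟩ := c.covers hx
    exact ⟨fun _ => A, fun _ => hA, hτ, hxA⟩
  · intro α hα t ht x hx y hy
    have hyQ : y ∈ Q := c.inv (α t) (hα t) x hx hy
    obtain ⟨A, hA, hyA⟩ := c.covers hyQ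
    refine Set.mem_biUnion ?_ hyA
    unfold Pset
    rw [dif_pos ht]
    refine ⟨Function.update α ⟨(t : ℕ) + 1, ht⟩ A, ?_, ?_, ?_⟩
    · intro t'
      rcases eq_or_ne t' ⟨(t : ℕ) + 1, ht⟩ with rfl | hne
      · simpa using hA
      · rw [Function.update_of_ne hne]; exact hα t'
    · intro t' ht'
      refine Function.update_of_ne ?_ _ _
      intro hEq
      rw [hEq] at ht'
      simp at ht'
    · rw [Function.update_self]

lemma spanning_nonempty {F : X → U → Set X} {Q : Set X} (hQ : Q.Nonempty)
    {c : InvCover F Q} {τ : ℕ} {𝒮 : Set (Fin τ → Set X)}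
    (hs : IsSpanning F Q c τ 𝒮) : ∃ α, α ∈ 𝒮 := by
  obtain ⟨x, hx⟩ := hQ
  obtain ⟨α, hα, -⟩ := hs.2.1 x hx
  exact ⟨α, hα⟩

lemma expNum_bddAbove {F : X → U → Set X} {Q : Set X} {c : InvCover F Q} {τ : ℕ}
    {𝒮 : Set (Fin τ → Set X)} (h : ∀ α ∈ 𝒮, ∀ t, α t ∈ c.cov) :
    ∀ n ∈ {n | ∃ α ∈ 𝒮, n = ∏ t ∈ Finset.range τ, (Pset 𝒮 α t).ncard},
      n ≤ c.cov.ncard ^ τ := by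
  rintro n ⟨α, hα, rfl⟩
  calc ∏ t ∈ Finset.range τ, (Pset 𝒮 α t).ncard
      ≤ ∏ _t ∈ Finset.range τ, c.cov.ncard :=
        Finset.prod_le_prod' (fun t _ => pset_ncard_le h α t)
    _ = c.cov.ncard ^ τ := by simp

lemma le_expNum {F : X → U → Set X} {Q : Set X} {c : InvCover F Q} {τ : ℕ}
    {𝒮 : Set (Fin τ → Set X)} (h : ∀ α ∈ 𝒮, ∀ t, α t ∈ c.cov)
    {α : Fin τ → Set X} (hα : α ∈ 𝒮) :
    ∏ t ∈ Finset.range τ, (Pset 𝒮 α t).ncard ≤ expNum 𝒮 :=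
  le_csSup ⟨c.cov.ncard ^ τ, expNum_bddAbove h⟩ ⟨α, hα, rfl⟩

lemma one_le_expNum {F : X → U → Set X} {Q : Set X} (hQ : Q.Nonempty)
    {c : InvCover F Q} {τ : ℕ} (hτ : 0 < τ) {𝒮 : Set (Fin τ → Set X)}
    (hs : IsSpanning F Q c τ 𝒮) : 1 ≤ expNum 𝒮 := by
  obtain ⟨α, hα⟩ := spanning_nonempty hQ hs
  calc (1 : ℕ) = ∏ _t ∈ Finset.range τ, 1 := by simp
    _ ≤ ∏ t ∈ Finset.range τ, (Pset 𝒮 α t).ncard :=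
        Finset.prod_le_prod' (fun t _ => one_le_pset_ncard hs.1 hτ hα t)
    _ ≤ expNum 𝒮 := le_expNum hs.1 hα

lemma rinv_attained (F : X → U → Set X) (Q : Set X) (hQ : Q.Nonempty)
    (c : InvCover F Q) {τ : ℕ} (hτ : 0 < τ) :
    ∃ k : ℕ, ∃ 𝒮 : Set (Fin τ → Set X), IsSpanning F Q c τ 𝒮 ∧ expNum 𝒮 = k ∧
      rinv F Q c τ = (k : ℕ∞) ∧ 1 ≤ k := by
  set T : Set ℕ := {k | ∃ 𝒮 : Set (Fin τ → Set X), IsSpanning F Q c τ 𝒮 ∧ expNum 𝒮 = k}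
    with hT
  have hTne : T.Nonempty := ⟨_, _, full_spanning F Q hQ c hτ, rfl⟩
  obtain ⟨𝒮₀, h𝒮₀, hk₀⟩ := Nat.sInf_mem hTne
  refine ⟨sInf T, 𝒮₀, h𝒮₀, hk₀, ?_, ?_⟩
  · apply le_antisymm
    · exact sInf_le ⟨𝒮₀, h𝒮₀, by exact_mod_cast hk₀.symm⟩
    · refine le_sInf ?_
      rintro m ⟨𝒮, h𝒮, rfl⟩
      have : sInf T ≤ expNum 𝒮 := Nat.sInf_le ⟨𝒮, h𝒮, rfl⟩
      exact_mod_cast this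
  · rw [← hk₀]; exact one_le_expNum hQ hτ h𝒮₀

lemma rinv_zero (F : X → U → Set X) (Q : Set X) (hQ : Q.Nonempty)
    (c : InvCover F Q) : rinv F Q c 0 = ⊤ := by
  have he : {n | ∃ 𝒮 : Set (Fin 0 → Set X), IsSpanning F Q c 0 𝒮 ∧ n = (expNum 𝒮 : ℕ∞)}
      = (∅ : Set ℕ∞) := by
    rw [Set.eq_empty_iff_forall_notMem]
    rintro n ⟨𝒮, h𝒮, -⟩
    obtain ⟨x, hx⟩ := hQ
    obtain ⟨-, -, h0, -⟩ := h𝒮.2.1 x hx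
    exact absurd h0 (lt_irrefl 0)
  rw [rinv, he, sInf_empty]

section cc

variable {τ₁ τ₂ : ℕ}

/-- Concatenation of two sequences of cover elements. -/
def cc (α₁ : Fin τ₁ → Set X) (α₂ : Fin τ₂ → Set X) : Fin (τ₁ + τ₂) → Set X :=
  fun t => if h : (t : ℕ) < τ₁ then α₁ ⟨t, h⟩
    else α₂ ⟨(t : ℕ) - τ₁, by have := t.isLt; omega⟩

lemma cc_apply_lt (α₁ : Fin τ₁ → Set X) (α₂ : Fin τ₂ → Set X) {t : Fin (τ₁ + τ₂)}
    (h : (t : ℕ) < τ₁) : cc α₁ α₂ t = α₁ ⟨t, h⟩ := dif_pos h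

lemma cc_apply_ge (α₁ : Fin τ₁ → Set X) (α₂ : Fin τ₂ → Set X) {t : Fin (τ₁ + τ₂)}
    (h : ¬ (t : ℕ) < τ₁) :
    cc α₁ α₂ t = α₂ ⟨(t : ℕ) - τ₁, by have := t.isLt; omega⟩ := dif_neg h

/-- The concatenation of spanning sets. -/
def ccS (𝒮₁ : Set (Fin τ₁ → Set X)) (𝒮₂ : Set (Fin τ₂ → Set X)) :
    Set (Fin (τ₁ + τ₂) → Set X) :=
  {α | ∃ α₁ ∈ 𝒮₁, ∃ α₂ ∈ 𝒮₂, α = cc α₁ α₂}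

variable {𝒮₁ : Set (Fin τ₁ → Set X)} {𝒮₂ : Set (Fin τ₂ → Set X)}
  {α₁ : Fin τ₁ → Set X} {α₂ : Fin τ₂ → Set X}

lemma cc_pset_lt {t : ℕ} (ht : t + 1 < τ₁) :
    Pset (ccS 𝒮₁ 𝒮₂) (cc α₁ α₂) t ⊆ Pset 𝒮₁ α₁ t := by
  intro A hA
  have ht' : t + 1 < τ₁ + τ₂ := by omega
  rw [Pset, dif_pos ht'] at hA
  rw [Pset, dif_pos ht]
  obtain ⟨β, ⟨β₁, hβ₁, β₂, hβ₂, rfl⟩, hm, rfl⟩ := hA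
  refine ⟨β₁, hβ₁, ?_, ?_⟩
  · intro t' ht'2
    have h1 : ((⟨(t' : ℕ), by omega⟩ : Fin (τ₁ + τ₂)) : ℕ) < τ₁ := t'.isLt
    have := hm ⟨(t' : ℕ), by omega⟩ ht'2
    rw [cc_apply_lt β₁ β₂ h1, cc_apply_lt α₁ α₂ h1] at this
    simpa using this
  · rw [cc_apply_lt β₁ β₂ (show ((⟨t + 1, ht'⟩ : Fin (τ₁ + τ₂)) : ℕ) < τ₁ from ht)]

lemma cc_pset_lt' {t : ℕ} (ht : t + 1 < τ₁) (hα₂ : α₂ ∈ 𝒮₂) :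
    Pset 𝒮₁ α₁ t ⊆ Pset (ccS 𝒮₁ 𝒮₂) (cc α₁ α₂) t := by
  intro A hA
  have ht' : t + 1 < τ₁ + τ₂ := by omega
  rw [Pset, dif_pos ht] at hA
  rw [Pset, dif_pos ht']
  obtain ⟨β₁, hβ₁, hm, rfl⟩ := hA
  refine ⟨cc β₁ α₂, ⟨β₁, hβ₁, α₂, hα₂, rfl⟩, ?_, ?_⟩
  · intro t' ht'2
    have h1 : (t' : ℕ) < τ₁ := by omega
    rw [cc_apply_lt β₁ α₂ h1, cc_apply_lt α₁ α₂ h1]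
    exact hm ⟨(t' : ℕ), h1⟩ ht'2
  · rw [cc_apply_lt β₁ α₂ (show ((⟨t + 1, ht'⟩ : Fin (τ₁ + τ₂)) : ℕ) < τ₁ from ht)]

lemma cc_pset_mid {t : ℕ} (ht : t + 1 = τ₁) (hτ₂ : 0 < τ₂) :
    Pset (ccS 𝒮₁ 𝒮₂) (cc α₁ α₂) t ⊆ Pset 𝒮₂ α₂ (τ₂ - 1) := by
  intro A hA
  have ht' : t + 1 < τ₁ + τ₂ := by omega
  rw [Pset, dif_pos ht'] at hA
  rw [Pset, dif_neg (show ¬ (τ₂ - 1) + 1 < τ₂ by omega)]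
  obtain ⟨β, ⟨β₁, hβ₁, β₂, hβ₂, rfl⟩, hm, rfl⟩ := hA
  refine ⟨β₂, hβ₂, hτ₂, ?_⟩
  rw [cc_apply_ge β₁ β₂ (show ¬ ((⟨t + 1, ht'⟩ : Fin (τ₁ + τ₂)) : ℕ) < τ₁ by simp; omega)]
  exact congrArg β₂ (Fin.ext (by show t + 1 - τ₁ = 0; omega))

lemma cc_pset_high {t : ℕ} (ht1 : τ₁ ≤ t) (ht2 : t + 1 < τ₁ + τ₂) :
    Pset (ccS 𝒮₁ 𝒮₂) (cc α₁ α₂) t ⊆ Pset 𝒮₂ α₂ (t - τ₁) := by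
  intro A hA
  rw [Pset, dif_pos ht2] at hA
  rw [Pset, dif_pos (show (t - τ₁) + 1 < τ₂ by omega)]
  obtain ⟨β, ⟨β₁, hβ₁, β₂, hβ₂, rfl⟩, hm, rfl⟩ := hA
  refine ⟨β₂, hβ₂, ?_, ?_⟩
  · intro s hs
    have h1 : ¬ ((⟨τ₁ + (s : ℕ), by omega⟩ : Fin (τ₁ + τ₂)) : ℕ) < τ₁ := by simp
    have := hm ⟨τ₁ + (s : ℕ), by omega⟩ (by simp; omega)
    rw [cc_apply_ge β₁ β₂ h1, cc_apply_ge α₁ α₂ h1] at this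
    have he : ((⟨τ₁ + (s : ℕ), by omega⟩ : Fin (τ₁ + τ₂)) : ℕ) - τ₁ = (s : ℕ) := by
      simp
    simp only [he] at this
    simpa using this
  · rw [cc_apply_ge β₁ β₂ (show ¬ ((⟨t + 1, ht2⟩ : Fin (τ₁ + τ₂)) : ℕ) < τ₁ by simp; omega)]
    exact congrArg β₂ (Fin.ext (by show t + 1 - τ₁ = t - τ₁ + 1; omega))

lemma cc_pset_high' {t : ℕ} (ht1 : τ₁ ≤ t) (ht2 : t + 1 < τ₁ + τ₂) (hα₁ : α₁ ∈ 𝒮₁) :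
    Pset 𝒮₂ α₂ (t - τ₁) ⊆ Pset (ccS 𝒮₁ 𝒮₂) (cc α₁ α₂) t := by
  intro A hA
  rw [Pset, dif_pos (show (t - τ₁) + 1 < τ₂ by omega)] at hA
  rw [Pset, dif_pos ht2]
  obtain ⟨β₂, hβ₂, hm, rfl⟩ := hA
  refine ⟨cc α₁ β₂, ⟨α₁, hα₁, β₂, hβ₂, rfl⟩, ?_, ?_⟩
  · intro t' ht'
    by_cases h1 : (t' : ℕ) < τ₁
    · rw [cc_apply_lt α₁ β₂ h1, cc_apply_lt α₁ α₂ h1]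
    · rw [cc_apply_ge α₁ β₂ h1, cc_apply_ge α₁ α₂ h1]
      exact hm ⟨(t' : ℕ) - τ₁, by have := t'.isLt; omega⟩ (by simp; omega)
  · rw [cc_apply_ge α₁ β₂ (show ¬ ((⟨t + 1, ht2⟩ : Fin (τ₁ + τ₂)) : ℕ) < τ₁ by simp; omega)]
    exact congrArg β₂ (Fin.ext (by show t - τ₁ + 1 = t + 1 - τ₁; omega))

lemma cc_pset_last {t : ℕ} (hlt : ¬ t + 1 < τ₁ + τ₂) (hτ₁ : 0 < τ₁) :
    Pset (ccS 𝒮₁ 𝒮₂) (cc α₁ α₂) t ⊆ Pset 𝒮₁ α₁ (τ₁ - 1) := by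
  intro A hA
  rw [Pset, dif_neg hlt] at hA
  rw [Pset, dif_neg (show ¬ (τ₁ - 1) + 1 < τ₁ by omega)]
  obtain ⟨β, ⟨β₁, hβ₁, β₂, hβ₂, rfl⟩, h0, rfl⟩ := hA
  refine ⟨β₁, hβ₁, hτ₁, ?_⟩
  rw [cc_apply_lt β₁ β₂ (show ((⟨0, h0⟩ : Fin (τ₁ + τ₂)) : ℕ) < τ₁ from hτ₁)]

end cc

lemma cc_spanning {F : X → U → Set X} {Q : Set X} (hQ : Q.Nonempty) {c : InvCover F Q}
    {τ₁ τ₂ : ℕ} (hτ₁ : 0 < τ₁) (hτ₂ : 0 < τ₂)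
    {𝒮₁ : Set (Fin τ₁ → Set X)} {𝒮₂ : Set (Fin τ₂ → Set X)}
    (h₁ : IsSpanning F Q c τ₁ 𝒮₁) (h₂ : IsSpanning F Q c τ₂ 𝒮₂) :
    IsSpanning F Q c (τ₁ + τ₂) (ccS 𝒮₁ 𝒮₂) := by
  obtain ⟨α₂0, hα₂0⟩ := spanning_nonempty hQ h₂
  refine ⟨?_, ?_, ?_⟩
  · rintro α ⟨α₁, hα₁, α₂, hα₂, rfl⟩ t
    by_cases h : (t : ℕ) < τ₁
    · rw [cc_apply_lt α₁ α₂ h]; exact h₁.1 α₁ hα₁ _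
    · rw [cc_apply_ge α₁ α₂ h]; exact h₂.1 α₂ hα₂ _
  · intro x hx
    obtain ⟨α₁, hα₁, h0, hx0⟩ := h₁.2.1 x hx
    refine ⟨cc α₁ α₂0, ⟨α₁, hα₁, α₂0, hα₂0, rfl⟩, by omega, ?_⟩
    rw [cc_apply_lt α₁ α₂0 (show ((⟨0, by omega⟩ : Fin (τ₁ + τ₂)) : ℕ) < τ₁ from h0)]
    exact hx0
  · rintro α ⟨α₁, hα₁, α₂, hα₂, rfl⟩ t ht x hx
    by_cases h1 : (t : ℕ) + 1 < τ₁
    · have hlt : (t : ℕ) < τ₁ := by omega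
      rw [cc_apply_lt α₁ α₂ hlt] at hx ⊢
      intro y hy
      have hmem := h₁.2.2 α₁ hα₁ ⟨(t : ℕ), hlt⟩ h1 x hx hy
      rw [Set.mem_iUnion₂] at hmem ⊢
      obtain ⟨A, hA, hyA⟩ := hmem
      exact ⟨A, cc_pset_lt' h1 hα₂ hA, hyA⟩
    · by_cases h2 : (t : ℕ) + 1 = τ₁
      · have hlt : (t : ℕ) < τ₁ := by omega
        rw [cc_apply_lt α₁ α₂ hlt] at hx ⊢
        intro y hy
        have hyQ : y ∈ Q := c.inv _ (h₁.1 α₁ hα₁ ⟨(t : ℕ), hlt⟩) x hx hy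
        obtain ⟨β₂, hβ₂, h0, hyβ⟩ := h₂.2.1 y hyQ
        refine Set.mem_biUnion ?_ hyβ
        rw [Pset, dif_pos ht]
        refine ⟨cc α₁ β₂, ⟨α₁, hα₁, β₂, hβ₂, rfl⟩, ?_, ?_⟩
        · intro t' ht'
          have hl : (t' : ℕ) < τ₁ := by omega
          rw [cc_apply_lt α₁ β₂ hl, cc_apply_lt α₁ α₂ hl]
        · rw [cc_apply_ge α₁ β₂
            (show ¬ ((⟨(t : ℕ) + 1, ht⟩ : Fin (τ₁ + τ₂)) : ℕ) < τ₁ by simp; omega)]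
          exact congrArg β₂ (Fin.ext (by show 0 = (t : ℕ) + 1 - τ₁; omega))
      · have hge : ¬ (t : ℕ) < τ₁ := by omega
        rw [cc_apply_ge α₁ α₂ hge] at hx ⊢
        intro y hy
        have hmem := h₂.2.2 α₂ hα₂ ⟨(t : ℕ) - τ₁, by have := t.isLt; omega⟩
          (by show (t : ℕ) - τ₁ + 1 < τ₂; omega) x hx hy
        rw [Set.mem_iUnion₂] at hmem ⊢
        obtain ⟨A, hA, hyA⟩ := hmem
        exact ⟨A, cc_pset_high' (by omega) ht hα₁ hA, hyA⟩

lemma cc_expNum_le {F : X → U → Set X} {Q : Set X} (hQ : Q.Nonempty) {c : InvCover F Q}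
    {τ₁ τ₂ : ℕ} (hτ₁ : 0 < τ₁) (hτ₂ : 0 < τ₂)
    {𝒮₁ : Set (Fin τ₁ → Set X)} {𝒮₂ : Set (Fin τ₂ → Set X)}
    (h₁ : IsSpanning F Q c τ₁ 𝒮₁) (h₂ : IsSpanning F Q c τ₂ 𝒮₂) :
    expNum (ccS 𝒮₁ 𝒮₂) ≤ expNum 𝒮₁ * expNum 𝒮₂ := by
  obtain ⟨k₁, hk₁⟩ : ∃ k, τ₁ = k + 1 := ⟨τ₁ - 1, by omega⟩
  obtain ⟨k₂, hk₂⟩ : ∃ k, τ₂ = k + 1 := ⟨τ₂ - 1, by omega⟩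
  subst hk₁; subst hk₂
  apply csSup_le
  · obtain ⟨α₁, hα₁⟩ := spanning_nonempty hQ h₁
    obtain ⟨α₂, hα₂⟩ := spanning_nonempty hQ h₂
    exact ⟨_, cc α₁ α₂, ⟨α₁, hα₁, α₂, hα₂, rfl⟩, rfl⟩
  rintro n ⟨α, ⟨α₁, hα₁, α₂, hα₂, rfl⟩, rfl⟩
  have hfin₁ : ∀ t, (Pset 𝒮₁ α₁ t).Finite :=
    fun t => c.finite.subset (pset_subset_cov h₁.1 α₁ t)
  have hfin₂ : ∀ t, (Pset 𝒮₂ α₂ t).Finite :=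
    fun t => c.finite.subset (pset_subset_cov h₂.1 α₂ t)
  have hb1 : ∀ t < k₁, (Pset (ccS 𝒮₁ 𝒮₂) (cc α₁ α₂) t).ncard ≤ (Pset 𝒮₁ α₁ t).ncard :=
    fun t ht => Set.ncard_le_ncard (cc_pset_lt (by omega)) (hfin₁ t)
  have hb2 : (Pset (ccS 𝒮₁ 𝒮₂) (cc α₁ α₂) k₁).ncard ≤ (Pset 𝒮₂ α₂ k₂).ncard :=
    Set.ncard_le_ncard (cc_pset_mid (by omega) hτ₂) (hfin₂ k₂)
  have hb3 : ∀ s < k₂, (Pset (ccS 𝒮₁ 𝒮₂) (cc α₁ α₂) ((k₁ + 1) + s)).ncard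
      ≤ (Pset 𝒮₂ α₂ s).ncard := by
    intro s hs
    have h' := cc_pset_high (𝒮₁ := 𝒮₁) (𝒮₂ := 𝒮₂) (α₁ := α₁) (α₂ := α₂)
      (t := (k₁ + 1) + s) (by omega) (by omega)
    rw [show (k₁ + 1) + s - (k₁ + 1) = s by omega] at h'
    exact Set.ncard_le_ncard h' (hfin₂ s)
  have hb4 : (Pset (ccS 𝒮₁ 𝒮₂) (cc α₁ α₂) ((k₁ + 1) + k₂)).ncard ≤ (Pset 𝒮₁ α₁ k₁).ncard :=
    Set.ncard_le_ncard (cc_pset_last (by omega) hτ₁) (hfin₁ k₁)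
  calc ∏ t ∈ Finset.range ((k₁ + 1) + (k₂ + 1)), (Pset (ccS 𝒮₁ 𝒮₂) (cc α₁ α₂) t).ncard
      = (∏ t ∈ Finset.range (k₁ + 1), (Pset (ccS 𝒮₁ 𝒮₂) (cc α₁ α₂) t).ncard) *
        ∏ s ∈ Finset.range (k₂ + 1), (Pset (ccS 𝒮₁ 𝒮₂) (cc α₁ α₂) ((k₁ + 1) + s)).ncard :=
        Finset.prod_range_add _ (k₁ + 1) (k₂ + 1)
    _ ≤ ((∏ t ∈ Finset.range k₁, (Pset 𝒮₁ α₁ t).ncard) * (Pset 𝒮₂ α₂ k₂).ncard) *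
        ((∏ s ∈ Finset.range k₂, (Pset 𝒮₂ α₂ s).ncard) * (Pset 𝒮₁ α₁ k₁).ncard) := by
        apply Nat.mul_le_mul
        · rw [Finset.prod_range_succ]
          exact Nat.mul_le_mul
            (Finset.prod_le_prod' fun t ht => hb1 t (Finset.mem_range.1 ht)) hb2
        · rw [Finset.prod_range_succ]
          exact Nat.mul_le_mul
            (Finset.prod_le_prod' fun s hs => hb3 s (Finset.mem_range.1 hs)) hb4
    _ = (∏ t ∈ Finset.range (k₁ + 1), (Pset 𝒮₁ α₁ t).ncard) *
        (∏ s ∈ Finset.range (k₂ + 1), (Pset 𝒮₂ α₂ s).ncard) := by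
        rw [Finset.prod_range_succ, Finset.prod_range_succ]; ring
    _ ≤ expNum 𝒮₁ * expNum 𝒮₂ := Nat.mul_le_mul (le_expNum h₁.1 hα₁) (le_expNum h₂.1 hα₂)

lemma rinv_subadd (F : X → U → Set X) (Q : Set X) (hQ : Q.Nonempty) (c : InvCover F Q)
    {τ₁ τ₂ : ℕ} (hτ₁ : 0 < τ₁) (hτ₂ : 0 < τ₂) :
    ∃ k₁ k₂ k₁₂ : ℕ, rinv F Q c τ₁ = (k₁ : ℕ∞) ∧ rinv F Q c τ₂ = (k₂ : ℕ∞) ∧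
      rinv F Q c (τ₁ + τ₂) = (k₁₂ : ℕ∞) ∧ 1 ≤ k₁ ∧ 1 ≤ k₂ ∧ 1 ≤ k₁₂ ∧ k₁₂ ≤ k₁ * k₂ := by
  obtain ⟨k₁, 𝒮₁, h𝒮₁, he₁, hr₁, h1₁⟩ := rinv_attained F Q hQ c hτ₁
  obtain ⟨k₂, 𝒮₂, h𝒮₂, he₂, hr₂, h1₂⟩ := rinv_attained F Q hQ c hτ₂
  obtain ⟨k₁₂, 𝒮₁₂, h𝒮₁₂, he₁₂, hr₁₂, h1₁₂⟩ := rinv_attained F Q hQ c (show 0 < τ₁ + τ₂ by omega)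
  refine ⟨k₁, k₂, k₁₂, hr₁, hr₂, hr₁₂, h1₁, h1₂, h1₁₂, ?_⟩
  have hle : rinv F Q c (τ₁ + τ₂) ≤ ((expNum (ccS 𝒮₁ 𝒮₂) : ℕ) : ℕ∞) :=
    sInf_le ⟨ccS 𝒮₁ 𝒮₂, cc_spanning hQ hτ₁ hτ₂ h𝒮₁ h𝒮₂, rfl⟩
  rw [hr₁₂] at hle
  have hle' : k₁₂ ≤ expNum (ccS 𝒮₁ 𝒮₂) := by exact_mod_cast hle
  calc k₁₂ ≤ expNum (ccS 𝒮₁ 𝒮₂) := hle'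
    _ ≤ expNum 𝒮₁ * expNum 𝒮₂ := cc_expNum_le hQ hτ₁ hτ₂ h𝒮₁ h𝒮₂
    _ = k₁ * k₂ := by rw [he₁, he₂]

lemma elog2_coe (n : ℕ) : elog2 (n : ℕ∞) = ((Real.logb 2 n : ℝ) : EReal) := rfl


/-- For any invariant cover `(𝒜,G)` of a system `Σ = (X,U,F)` and a nonempty
set `Q ⊆ X`, the function `τ ↦ log₂ r_inv(τ,Q)` is subadditive, and consequently
`(1/τ) log₂ r_inv(τ,Q)` converges as `τ → ∞` to `inf_{τ ≥ 1} (1/τ) log₂ r_inv(τ,Q)`. -/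
theorem invariance_entropy_subadditive_and_limit
    {X U : Type*} [Nonempty X] [Nonempty U]
    (F : X → U → Set X) (hF : ∀ x u, (F x u).Nonempty)
    (Q : Set X) (hQ : Q.Nonempty) (c : InvCover F Q) :
    (∀ τ₁ τ₂ : ℕ, 0 < τ₁ → 0 < τ₂ →
      elog2 (rinv F Q c (τ₁ + τ₂)) ≤ elog2 (rinv F Q c τ₁) + elog2 (rinv F Q c τ₂)) ∧
    Tendsto (fun τ : ℕ => (((τ : ℝ)⁻¹ : ℝ) : EReal) * elog2 (rinv F Q c τ)) atTop
      (𝓝 (coverEntropy F Q c)) := by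
  have hsub : ∀ τ₁ τ₂ : ℕ, 0 < τ₁ → 0 < τ₂ →
      elog2 (rinv F Q c (τ₁ + τ₂)) ≤ elog2 (rinv F Q c τ₁) + elog2 (rinv F Q c τ₂) := by
    intro τ₁ τ₂ hτ₁ hτ₂
    obtain ⟨k₁, k₂, k₁₂, h1, h2, h3, g1, g2, g3, hm⟩ := rinv_subadd F Q hQ c hτ₁ hτ₂
    rw [h1, h2, h3, elog2_coe, elog2_coe, elog2_coe, ← EReal.coe_add, EReal.coe_le_coe_iff]
    have p1 : (0 : ℝ) < k₁ := by exact_mod_cast g1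
    have p2 : (0 : ℝ) < k₂ := by exact_mod_cast g2
    have p3 : (0 : ℝ) < k₁₂ := by exact_mod_cast g3
    calc Real.logb 2 k₁₂ ≤ Real.logb 2 ((k₁ : ℝ) * k₂) := by
          apply Real.logb_le_logb_of_le one_lt_two p3
          exact_mod_cast hm
      _ = Real.logb 2 k₁ + Real.logb 2 k₂ := Real.logb_mul p1.ne' p2.ne'
  refine ⟨hsub, ?_⟩
  set a : ℕ → ℝ := fun τ => (elog2 (rinv F Q c τ)).toReal with ha
  have hval : ∀ τ : ℕ, 0 < τ → ∃ k : ℕ, 1 ≤ k ∧ rinv F Q c τ = (k : ℕ∞) ∧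
      elog2 (rinv F Q c τ) = ((a τ : ℝ) : EReal) ∧ a τ = Real.logb 2 k := by
    intro τ hτ
    obtain ⟨k, 𝒮, -, -, hr, hk⟩ := rinv_attained F Q hQ c hτ
    have h1 : elog2 (rinv F Q c τ) = ((Real.logb 2 k : ℝ) : EReal) := by
      rw [hr, elog2_coe]
    have h2 : a τ = Real.logb 2 k := by rw [ha]; simp only [h1, EReal.toReal_coe]
    exact ⟨k, hk, hr, by rw [h1, h2], h2⟩
  have ha0 : a 0 = 0 := by
    have ht : elog2 (rinv F Q c 0) = ⊤ := by rw [rinv_zero F Q hQ c]; rfl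
    rw [ha]; simp only [ht, EReal.toReal_top]
  have hnn : ∀ n : ℕ, 0 ≤ a n := by
    intro n
    rcases Nat.eq_zero_or_pos n with rfl | hn
    · rw [ha0]
    · obtain ⟨k, hk, -, -, e2⟩ := hval n hn
      rw [e2]
      exact Real.logb_nonneg one_lt_two (by exact_mod_cast hk)
  have hA : Subadditive a := by
    intro m n
    rcases Nat.eq_zero_or_pos m with rfl | hm
    · rw [Nat.zero_add, ha0, zero_add]
    rcases Nat.eq_zero_or_pos n with rfl | hn
    · rw [Nat.add_zero, ha0, add_zero]
    obtain ⟨k, -, -, e1, -⟩ := hval (m + n) (by omega)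
    obtain ⟨k₁, -, -, e2, -⟩ := hval m hm
    obtain ⟨k₂, -, -, e3, -⟩ := hval n hn
    have h := hsub m n hm hn
    rw [e1, e2, e3, ← EReal.coe_add, EReal.coe_le_coe_iff] at h
    exact h
  have hbdd : BddBelow (Set.range fun n : ℕ => a n / n) := by
    refine ⟨0, ?_⟩
    rintro x ⟨n, rfl⟩
    exact div_nonneg (hnn n) (Nat.cast_nonneg n)
  have hlim := hA.tendsto_lim hbdd
  have hlimE : Tendsto (fun τ : ℕ => ((a τ / τ : ℝ) : EReal)) atTop (𝓝 (hA.lim : EReal)) :=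
    EReal.tendsto_coe.2 hlim
  have heq : ∀ τ : ℕ, 0 < τ →
      (((τ : ℝ)⁻¹ : ℝ) : EReal) * elog2 (rinv F Q c τ) = ((a τ / τ : ℝ) : EReal) := by
    intro τ hτ
    obtain ⟨k, -, -, e1, -⟩ := hval τ hτ
    rw [e1, ← EReal.coe_mul]
    exact congrArg _ (div_eq_inv_mul _ _).symm
  have hev : (fun τ : ℕ => ((a τ / τ : ℝ) : EReal))
      =ᶠ[atTop] fun τ : ℕ => (((τ : ℝ)⁻¹ : ℝ) : EReal) * elog2 (rinv F Q c τ) := by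
    filter_upwards [eventually_ge_atTop 1] with τ hτ
    exact (heq τ hτ).symm
  have hS : ((fun n : ℕ => a n / n) '' Set.Ici 1).Nonempty := ⟨_, Set.mem_image_of_mem _ (Set.self_mem_Ici (a := 1))⟩
  have hSb : BddBelow ((fun n : ℕ => a n / n) '' Set.Ici 1) := by
    refine ⟨0, ?_⟩
    rintro x ⟨n, -, rfl⟩
    exact div_nonneg (hnn n) (Nat.cast_nonneg n)
  have hmap : ((hA.lim : ℝ) : EReal)
      = sInf ((fun x : ℝ => (x : EReal)) '' ((fun n : ℕ => a n / n) '' Set.Ici 1)) := by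
    have hl : hA.lim = sInf ((fun n : ℕ => a n / n) '' Set.Ici 1) := by rw [Subadditive.lim]
    rw [hl]
    exact Monotone.map_csInf_of_continuousAt continuous_coe_real_ereal.continuousAt
      (fun x y h => EReal.coe_le_coe_iff.2 h) hS hSb
  have hce : coverEntropy F Q c = ((hA.lim : ℝ) : EReal) := by
    rw [hmap]
    apply le_antisymm
    · apply le_sInf
      rintro b ⟨x, ⟨n, hn, rfl⟩, rfl⟩
      have hn' : 0 < n := hn
      calc coverEntropy F Q c ≤ (((n : ℝ)⁻¹ : ℝ) : EReal) * elog2 (rinv F Q c n) :=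
            iInf_le_of_le n (iInf_le _ hn')
        _ = ((a n / n : ℝ) : EReal) := heq n hn'
    · rw [coverEntropy]
      apply le_iInf; intro τ
      apply le_iInf; intro hτ
      rw [heq τ hτ]
      exact sInf_le ⟨a τ / τ, ⟨τ, Set.mem_Ici.2 hτ, rfl⟩, rfl⟩
  rw [hce]
  exact hlimE.congr' hev
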